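/- Let W be the weight matrix and θ the threshold vector of a Hopfield network on n neurons, and let s be any state. For every fair update sequence useq : ℕ → Fin n, there exists N such that the state seqStates(s, useq, N) obtained after N asynchronous updates along useq is stable. -/
import Mathlib


open Finset

noncomputable section

/-- The net input to neuron `u` in state `s`: `∑_{v ≠ u} W u v * s v`. -/
def netInput {n : ℕ} (W : Matrix (Fin n) (Fin n) ℝ) (s : Fin n → ℝ) (u : Fin n) : ℝ :=
  ∑ v ∈ univ.filter (fun v => v ≠ u), W u v * s v

/-- Asynchronous update of the state `s` at neuron `u`. -/
def Up {n : ℕ} (W : Matrix (Fin n) (Fin n) ℝ) (θ : Fin n → ℝ) (s : Fin n → ℝ)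
    (u : Fin n) : Fin n → ℝ :=
  Function.update s u (if θ u ≤ netInput W s u then 1 else -1)

/-- The energy of a state of a Hopfield network. -/
def energy {n : ℕ} (W : Matrix (Fin n) (Fin n) ℝ) (θ : Fin n → ℝ) (s : Fin n → ℝ) : ℝ :=
  -(1 / 2) * (∑ u, ∑ v ∈ univ.filter (fun v => v ≠ u), W u v * s u * s v)
    + ∑ u, θ u * s u

/-- The trajectory of states obtained by asynchronously updating along the sequence `useq`. -/
def seqStates {n : ℕ} (W : Matrix (Fin n) (Fin n) ℝ) (θ : Fin n → ℝ)
    (s : Fin n → ℝ) (useq : ℕ → Fin n) : ℕ → (Fin n → ℝ)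
  | 0 => s
  | k + 1 => Up W θ (seqStates W θ s useq k) (useq k)

/-- A state is stable if updating any neuron leaves the state unchanged. -/
def isStable {n : ℕ} (W : Matrix (Fin n) (Fin n) ℝ) (θ : Fin n → ℝ)
    (s : Fin n → ℝ) : Prop :=
  ∀ u, Up W θ s u = s

/-- A sequence of neurons is fair if every neuron occurs infinitely often. -/
def fair {n : ℕ} (useq : ℕ → Fin n) : Prop :=
  ∀ u k, ∃ m ≥ k, useq m = u

lemma quad_update {n : ℕ} (W : Matrix (Fin n) (Fin n) ℝ) (hsymm : W.IsSymm)
    (s : Fin n → ℝ) (u : Fin n) (a : ℝ) :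
    (∑ x, ∑ v ∈ univ.filter (fun v => v ≠ x),
        W x v * Function.update s u a x * Function.update s u a v)
      = (∑ x, ∑ v ∈ univ.filter (fun v => v ≠ x), W x v * s x * s v)
        + 2 * (a - s u) * netInput W s u := by
  set F : Fin n → ℝ := fun x => ∑ v ∈ univ.filter (fun v => v ≠ x),
      W x v * Function.update s u a x * Function.update s u a v with hF
  set G : Fin n → ℝ := fun x => ∑ v ∈ univ.filter (fun v => v ≠ x), W x v * s x * s v with hG
  have h1 : ∀ x, x ≠ u → F x - G x = W x u * s x * (a - s u) := by
    intro x hx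
    have : F x - G x = ∑ v ∈ univ.filter (fun v => v ≠ x),
        (W x v * s x * Function.update s u a v - W x v * s x * s v) := by
      rw [hF, hG, ← Finset.sum_sub_distrib]
      refine Finset.sum_congr rfl fun v _ => ?_
      rw [Function.update_of_ne hx]
    rw [this]
    rw [Finset.sum_eq_single u]
    · rw [Function.update_self]; ring
    · intro v _ hv
      rw [Function.update_of_ne hv]; ring
    · intro h
      exact absurd (Finset.mem_filter.mpr ⟨Finset.mem_univ u, fun h' => hx h'.symm⟩) h
  have h2 : F u - G u = (a - s u) * netInput W s u := by
    have : F u - G u = ∑ v ∈ univ.filter (fun v => v ≠ u),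
        ((a - s u) * (W u v * s v)) := by
      rw [hF, hG, ← Finset.sum_sub_distrib]
      refine Finset.sum_congr rfl fun v hv => ?_
      have hvne : v ≠ u := (Finset.mem_filter.mp hv).2
      rw [Function.update_self, Function.update_of_ne hvne]; ring
    rw [this, ← Finset.mul_sum, netInput]
  have key : (∑ x, F x) - (∑ x, G x) = 2 * (a - s u) * netInput W s u := by
    rw [← Finset.sum_sub_distrib]
    rw [← Finset.add_sum_erase univ (fun x => F x - G x) (Finset.mem_univ u)]
    have herase : ∑ x ∈ univ.erase u, (F x - G x)
        = ∑ x ∈ univ.erase u, (a - s u) * (W u x * s x) := by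
      refine Finset.sum_congr rfl fun x hx => ?_
      have hxu : x ≠ u := (Finset.mem_erase.mp hx).1
      rw [h1 x hxu]
      have : W x u = W u x := by
        have := congrFun (congrFun hsymm.eq x) u
        simpa [Matrix.transpose_apply] using this.symm
      rw [this]; ring
    rw [herase, ← Finset.mul_sum, h2]
    have : ∑ x ∈ univ.erase u, W u x * s x = netInput W s u := by
      rw [netInput, Finset.filter_ne']
    rw [this]; ring
  linarith [key]

lemma energy_update {n : ℕ} (W : Matrix (Fin n) (Fin n) ℝ) (hsymm : W.IsSymm)
    (θ : Fin n → ℝ) (s : Fin n → ℝ) (u : Fin n) (a : ℝ) :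
    energy W θ (Function.update s u a)
      = energy W θ s + (a - s u) * (θ u - netInput W s u) := by
  have hth : (∑ x, θ x * Function.update s u a x) = (∑ x, θ x * s x) + θ u * (a - s u) := by
    rw [← Finset.add_sum_erase univ (fun x => θ x * Function.update s u a x) (Finset.mem_univ u),
        ← Finset.add_sum_erase univ (fun x => θ x * s x) (Finset.mem_univ u)]
    have : ∑ x ∈ univ.erase u, θ x * Function.update s u a x
        = ∑ x ∈ univ.erase u, θ x * s x := by
      refine Finset.sum_congr rfl fun x hx => ?_
      rw [Function.update_of_ne (Finset.mem_erase.mp hx).1]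
    rw [this, Function.update_self]; ring
  rw [energy, energy, quad_update W hsymm s u a, hth]; ring

lemma sum_update {n : ℕ} (s : Fin n → ℝ) (u : Fin n) (a : ℝ) :
    (∑ x, Function.update s u a x) = (∑ x, s x) + (a - s u) := by
  rw [← Finset.add_sum_erase univ (Function.update s u a) (Finset.mem_univ u),
      ← Finset.add_sum_erase univ s (Finset.mem_univ u)]
  have : ∑ x ∈ univ.erase u, Function.update s u a x = ∑ x ∈ univ.erase u, s x := by
    refine Finset.sum_congr rfl fun x hx => ?_
    rw [Function.update_of_ne (Finset.mem_erase.mp hx).1]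
  rw [this, Function.update_self]; ring

lemma energy_Up_le {n : ℕ} (W : Matrix (Fin n) (Fin n) ℝ) (hsymm : W.IsSymm)
    (θ : Fin n → ℝ) (s : Fin n → ℝ) (u : Fin n) (hsu : s u = -1 ∨ s u = 1) :
    energy W θ (Up W θ s u) ≤ energy W θ s := by
  rw [Up, energy_update W hsymm]
  by_cases h : θ u ≤ netInput W s u
  · rw [if_pos h]
    rcases hsu with h' | h' <;> rw [h'] <;> nlinarith
  · rw [if_neg h]
    push_neg at h
    rcases hsu with h' | h' <;> rw [h'] <;> nlinarith

lemma Up_change {n : ℕ} (W : Matrix (Fin n) (Fin n) ℝ) (hsymm : W.IsSymm)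
    (θ : Fin n → ℝ) (s : Fin n → ℝ) (u : Fin n) (hsu : s u = -1 ∨ s u = 1)
    (hne : Up W θ s u ≠ s) :
    energy W θ (Up W θ s u) < energy W θ s ∨
      (energy W θ (Up W θ s u) = energy W θ s ∧
        (∑ x, Up W θ s u x) = (∑ x, s x) + 2) := by
  by_cases h : θ u ≤ netInput W s u
  · have hsu' : s u = -1 := by
      rcases hsu with h' | h'
      · exact h'
      · exfalso; apply hne; rw [Up, if_pos h, ← h', Function.update_eq_self]
    rw [Up, if_pos h, energy_update W hsymm, sum_update, hsu']
    rcases lt_or_eq_of_le h with hlt | heq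
    · left; nlinarith
    · right; constructor
      · rw [← heq]; ring
      · ring
  · have hsu' : s u = 1 := by
      rcases hsu with h' | h'
      · exfalso; apply hne; rw [Up, if_neg h, ← h', Function.update_eq_self]
      · exact h'
    push_neg at h
    left
    rw [Up, if_neg (not_le.mpr h), energy_update W hsymm, hsu']
    nlinarith

/-- Convergence of a Hopfield network under any fair asynchronous update sequence. -/
theorem hopfieldNet_convergence_fair {n : ℕ} (hn : 2 ≤ n)
    (W : Matrix (Fin n) (Fin n) ℝ) (hsymm : W.IsSymm) (hdiag : ∀ u, W u u = 0)
    (θ : Fin n → ℝ) (s : Fin n → ℝ) (hs : ∀ u, s u = -1 ∨ s u = 1) :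
    ∀ useq : ℕ → Fin n, fair useq →
      ∃ N, isStable W θ (seqStates W θ s useq N) := by
  intro useq hfair
  set st : ℕ → Fin n → ℝ := seqStates W θ s useq with hst
  have hstep : ∀ k, st (k + 1) = Up W θ (st k) (useq k) := fun k => rfl
  have hpm : ∀ k u, st k u = -1 ∨ st k u = 1 := by
    intro k
    induction k with
    | zero => exact hs
    | succ k ih =>
      intro u
      rw [hstep k, Up]
      by_cases h : u = useq k
      · subst h
        rw [Function.update_self]
        split_ifs
        · right; rfl
        · left; rfl
      · rw [Function.update_of_ne h]
        exact ih u
  set E : ℕ → ℝ := fun k => energy W θ (st k) with hE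
  set S : ℕ → ℝ := fun k => ∑ x, st k x with hS
  have hEanti : Antitone E := by
    apply antitone_nat_of_succ_le
    intro k
    rw [hE]
    simp only []
    rw [hstep k]
    exact energy_Up_le W hsymm θ (st k) (useq k) (hpm k (useq k))
  -- finiteness of the set of possible states
  have hPfin : (Set.pi Set.univ (fun _ : Fin n => ({-1, 1} : Set ℝ))).Finite :=
    Set.Finite.pi (fun _ => (Set.finite_singleton 1).insert (-1))
  have hstmem : ∀ k, st k ∈ Set.pi Set.univ (fun _ : Fin n => ({-1, 1} : Set ℝ)) := by
    intro k u _
    rcases hpm k u with h | h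
    · exact Or.inl h
    · exact Or.inr h
  have hEfin : (Set.range E).Finite := by
    apply Set.Finite.subset (hPfin.image (energy W θ))
    rintro _ ⟨k, rfl⟩
    exact ⟨st k, hstmem k, rfl⟩
  have hSfin : (Set.range S).Finite := by
    apply Set.Finite.subset (hPfin.image (fun f => ∑ x, f x))
    rintro _ ⟨k, rfl⟩
    exact ⟨st k, hstmem k, rfl⟩
  -- stage 1 : energy eventually constant
  have hTne : hEfin.toFinset.Nonempty := by
    rw [Set.Finite.toFinset_nonempty]
    exact ⟨E 0, 0, rfl⟩
  obtain ⟨N₁, hN₁⟩ : ∃ N₁, E N₁ = hEfin.toFinset.min' hTne := by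
    have := Finset.min'_mem hEfin.toFinset hTne
    rw [Set.Finite.mem_toFinset] at this
    obtain ⟨k, hk⟩ := this
    exact ⟨k, hk⟩
  have hEmin : ∀ k, E N₁ ≤ E k := by
    intro k
    rw [hN₁]
    exact Finset.min'_le _ _ (by rw [Set.Finite.mem_toFinset]; exact ⟨k, rfl⟩)
  have hEconst : ∀ k, N₁ ≤ k → E k = E N₁ :=
    fun k hk => le_antisymm (hEanti hk) (hEmin k)
  -- stage 2 : the sum of states is monotone after N₁
  have hSstep : ∀ k, N₁ ≤ k → S k ≤ S (k + 1) := by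
    intro k hk
    by_cases hchg : st (k + 1) = st k
    · rw [hS]; simp only []; rw [hchg]
    · have hne : Up W θ (st k) (useq k) ≠ st k := by rw [← hstep k]; exact hchg
      rcases Up_change W hsymm θ (st k) (useq k) (hpm k (useq k)) hne with hlt | ⟨_, hsum⟩
      · exfalso
        have h1 : E (k + 1) = E N₁ := hEconst (k + 1) (le_trans hk (Nat.le_succ k))
        have h2 : E k = E N₁ := hEconst k hk
        have : E (k + 1) < E k := by
          rw [hE]; simp only []; rw [hstep k]; exact hlt
        rw [h1, h2] at this
        exact lt_irrefl _ this
      · have : S (k + 1) = S k + 2 := by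
          rw [hS]; simp only []; rw [hstep k]; exact hsum
        linarith
  have hSmono : ∀ j k, N₁ ≤ j → j ≤ k → S j ≤ S k := by
    intro j k hj hjk
    induction k with
    | zero =>
      have : j = 0 := Nat.le_zero.mp hjk
      subst this; exact le_refl _
    | succ k ih =>
      rcases Nat.lt_or_ge j (k + 1) with h | h
      · have hjk' : j ≤ k := Nat.lt_succ_iff.mp h
        exact le_trans (ih hjk') (hSstep k (le_trans hj hjk'))
      · have : j = k + 1 := le_antisymm hjk h
        subst this; exact le_refl _
  -- maximum of S over the tail
  have hS'fin : (Set.range (fun j => S (N₁ + j))).Finite :=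
    Set.Finite.subset hSfin (by rintro _ ⟨j, rfl⟩; exact ⟨N₁ + j, rfl⟩)
  have hS'ne : hS'fin.toFinset.Nonempty := by
    rw [Set.Finite.toFinset_nonempty]
    exact ⟨S (N₁ + 0), 0, rfl⟩
  obtain ⟨j₂, hj₂⟩ : ∃ j₂, S (N₁ + j₂) = hS'fin.toFinset.max' hS'ne := by
    have := Finset.max'_mem hS'fin.toFinset hS'ne
    rw [Set.Finite.mem_toFinset] at this
    obtain ⟨j, hj⟩ := this
    exact ⟨j, hj⟩
  set N := N₁ + j₂ with hN
  have hNle : N₁ ≤ N := Nat.le_add_right _ _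
  have hSconst : ∀ k, N ≤ k → S k = S N := by
    intro k hk
    refine le_antisymm ?_ (hSmono N k hNle hk)
    rw [hj₂]
    refine Finset.le_max' _ _ ?_
    rw [Set.Finite.mem_toFinset]
    exact ⟨k - N₁, show S (N₁ + (k - N₁)) = S k by rw [Nat.add_sub_cancel' (le_trans hNle hk)]⟩
  -- no state change after N
  have hnochange : ∀ k, N ≤ k → st (k + 1) = st k := by
    intro k hk
    by_contra hchg
    have hne : Up W θ (st k) (useq k) ≠ st k := by rw [← hstep k]; exact hchg
    rcases Up_change W hsymm θ (st k) (useq k) (hpm k (useq k)) hne with hlt | ⟨_, hsum⟩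
    · have h1 : E (k + 1) = E N₁ := hEconst (k + 1) (le_trans (le_trans hNle hk) (Nat.le_succ k))
      have h2 : E k = E N₁ := hEconst k (le_trans hNle hk)
      have : E (k + 1) < E k := by
        rw [hE]; simp only []; rw [hstep k]; exact hlt
      rw [h1, h2] at this
      exact lt_irrefl _ this
    · have h3 : S (k + 1) = S k + 2 := by
        rw [hS]; simp only []; rw [hstep k]; exact hsum
      have h1 : S (k + 1) = S N := hSconst (k + 1) (le_trans hk (Nat.le_succ k))
      have h2 : S k = S N := hSconst k hk
      rw [h1, h2] at h3
      linarith
  have hconst : ∀ k, N ≤ k → st k = st N := by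
    intro k hk
    induction k with
    | zero =>
      have : N = 0 := Nat.le_zero.mp hk
      rw [this]
    | succ k ih =>
      rcases Nat.lt_or_ge N (k + 1) with h | h
      · have hk' : N ≤ k := Nat.lt_succ_iff.mp h
        rw [hnochange k hk', ih hk']
      · have : N = k + 1 := le_antisymm hk h
        rw [this]
  refine ⟨N, ?_⟩
  intro u
  obtain ⟨m, hm, hum⟩ := hfair u N
  have h1 : Up W θ (st m) (useq m) = st m := by
    rw [← hstep m]
    exact (hconst (m + 1) (le_trans hm (Nat.le_succ m))).trans (hconst m hm).symm
  rw [hconst m hm, hum] at h1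
  exact h1
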